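/- For any directed hypergraph G = (V, E) and I₁ = (0 → 1), there is an inclusion of path complexes λ: [𝔅(G)]^↑ → 𝔅(G □ I₁); that is, every path of the cylinder of the bold path complex of G is a bold path of G □ I₁, under the identification of V × {0,1} with V ⊔ V'. -/

import Mathlib

/-- A directed hypergraph: a vertex type, an arrow type, and origin/end subsets. -/
structure DiHyp where
  V : Type
  E : Type
  orig : E → Set V
  dest : E → Set V

/-- The axioms of Definition 2.1: origins and ends are non-empty and disjoint,
and the union of origins and ends of all arrows is the whole vertex set. -/
def DiHyp.IsLegal (G : DiHyp) : Prop :=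
  (∀ e, (G.orig e).Nonempty) ∧ (∀ e, (G.dest e).Nonempty) ∧
    (∀ e, Disjoint (G.orig e) (G.dest e)) ∧
    (⋃ e, G.orig e ∪ G.dest e) = Set.univ

/-- A pair of maps is a morphism of directed hypergraphs iff
ℙ(f_V) ∘ φ_G = φ_H ∘ f_E. -/
def DiHyp.IsHom (G H : DiHyp) (fV : G.V → H.V) (fE : G.E → H.E) : Prop :=
  ∀ e, H.orig (fE e) = fV '' G.orig e ∧ H.dest (fE e) = fV '' G.dest e

/-- Bundled morphism of directed hypergraphs. -/
structure DiHyp.Hom (G H : DiHyp) where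
  onV : G.V → H.V
  onE : G.E → H.E
  comm : DiHyp.IsHom G H onV onE

/-- The set P₀₁(G) of subsets occurring as origin or end of some arrow. -/
def DiHyp.P01 (G : DiHyp) : Set (Set G.V) := {C | ∃ e, G.orig e = C ∨ G.dest e = C}

/-- The box product of directed hypergraphs. -/
def DiHyp.box (G H : DiHyp) : DiHyp where
  V := G.V × H.V
  E := (G.E × {C : Set H.V // C ∈ H.P01}) ⊕ ({A : Set G.V // A ∈ G.P01} × H.E)
  orig := fun e => match e with
    | .inl (e, C) => G.orig e ×ˢ C.1
    | .inr (A, e) => A.1 ×ˢ H.orig e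
  dest := fun e => match e with
    | .inl (e, C) => G.dest e ×ˢ C.1
    | .inr (A, e) => A.1 ×ˢ H.dest e

/-- The line digraph I₁, as a directed hypergraph: one arrow {b} → {!b}. -/
def lineI1 (b : Bool) : DiHyp where
  V := Bool
  E := Unit
  orig _ := {b}
  dest _ := {!b}

lemma singleton_mem_P01_lineI1 (b i : Bool) : ({i} : Set Bool) ∈ (lineI1 b).P01 :=
  ⟨(), by cases b <;> cases i <;> simp [lineI1]⟩

/-- The cylinder P^↑ = P ∪ P' ∪ P^# of a set of paths, on V × Bool
(false = the bottom copy V, true = the primed top copy V'). -/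
def cylinder {V : Type} (P : Set (List V)) : Set (List (V × Bool)) :=
  {q | (∃ p ∈ P, q = p.map (·, false)) ∨ (∃ p ∈ P, q = p.map (·, true)) ∨
    ∃ p ∈ P, ∃ k : ℕ, k < p.length ∧
      q = (p.take (k + 1)).map (·, false) ++ (p.drop k).map (·, true)}

/-- The bold path complex 𝔅(G): q is a bold path iff either q lies entirely in the
origin or in the end of a single hyperedge (the degenerate case of an empty edge
sequence), or q decomposes as a concatenation
p₀ ∨ (v₀w₀) ∨ p₁ ∨ (v₁w₁) ∨ ⋯ ∨ p_r ∨ (v_r w_r) ∨ p_{r+1}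
along a chain of hyperedges (A₀ → B₀), …, (A_r → B_r) with B_i ∩ A_{i+1} ≠ ∅,
where p₀ ⊆ A₀, p_{r+1} ⊆ B_r, p_i ⊆ B_{i-1} ∩ A_i, v_i ∈ A_i, w_i ∈ B_i,
p_i ends at v_i and p_{i+1} starts at w_i (so all concatenations are defined). -/
def IsBold (G : DiHyp) (q : List G.V) : Prop :=
  q ≠ [] ∧
    ((∃ e : G.E, (∀ x ∈ q, x ∈ G.orig e) ∨ ∀ x ∈ q, x ∈ G.dest e) ∨
      ∃ (r : ℕ) (e : Fin (r + 1) → G.E) (p : Fin (r + 2) → List G.V)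
        (v w : Fin (r + 1) → G.V),
        (∀ i : Fin r, (G.dest (e i.castSucc) ∩ G.orig (e i.succ)).Nonempty) ∧
        (∀ i, p i ≠ []) ∧
        (∀ x ∈ p 0, x ∈ G.orig (e 0)) ∧
        (∀ x ∈ p (Fin.last (r + 1)), x ∈ G.dest (e (Fin.last r))) ∧
        (∀ i : Fin r, ∀ x ∈ p i.succ.castSucc,
          x ∈ G.dest (e i.castSucc) ∧ x ∈ G.orig (e i.succ)) ∧
        (∀ i : Fin (r + 1), v i ∈ G.orig (e i) ∧ w i ∈ G.dest (e i)) ∧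
        (∀ i : Fin (r + 1),
          (p i.castSucc).getLast? = some (v i) ∧ (p i.succ).head? = some (w i)) ∧
        q = (List.ofFn p).flatten)

namespace Stmt15

variable {G : DiHyp}

/-- Auxiliary inductive: `q` is a valid "tail" of a bold decomposition whose
previous edge is `e`. -/
inductive BoldAux (G : DiHyp) : G.E → List G.V → Prop
  | last (e : G.E) (p : List G.V) (hp : p ≠ []) (h : ∀ x ∈ p, x ∈ G.dest e) :
      BoldAux G e p
  | cons (e e' : G.E) (p q : List G.V) (hp : p ≠ [])
      (h : ∀ x ∈ p, x ∈ G.dest e ∧ x ∈ G.orig e')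
      (hq : BoldAux G e' q) : BoldAux G e (p ++ q)

/-- Non-degenerate bold paths, inductively. -/
def Bold' (G : DiHyp) (q : List G.V) : Prop :=
  ∃ (e : G.E) (p rest : List G.V), p ≠ [] ∧ (∀ x ∈ p, x ∈ G.orig e) ∧
    BoldAux G e rest ∧ q = p ++ rest

lemma BoldAux.extract {e : G.E} {rest : List G.V} (h : BoldAux G e rest) :
    ∃ (r : ℕ) (es : Fin (r + 1) → G.E) (ps : Fin (r + 1) → List G.V),
      es 0 = e ∧ (∀ i, ps i ≠ []) ∧ (∀ i, ∀ x ∈ ps i, x ∈ G.dest (es i)) ∧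
      (∀ i : Fin r, ∀ x ∈ ps i.castSucc, x ∈ G.orig (es i.succ)) ∧
      rest = (List.ofFn ps).flatten := by
  induction h with
  | last e p hp h =>
      exact ⟨0, fun _ => e, fun _ => p, rfl, fun _ => hp, fun _ => h,
        fun i => i.elim0, by simp⟩
  | cons e e' p q hp h hq ih =>
      obtain ⟨r, es, ps, h0, hne, hdest, horig, hflat⟩ := ih
      refine ⟨r + 1, Fin.cons e es, Fin.cons p ps, rfl, ?_, ?_, ?_, ?_⟩
      · intro i
        refine Fin.cases ?_ ?_ i
        · exact hp
        · intro j; simpa using hne j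
      · intro i
        refine Fin.cases ?_ ?_ i
        · simpa using fun x hx => (h x hx).1
        · intro j; simpa using hdest j
      · intro i
        refine Fin.cases ?_ ?_ i
        · intro x hx
          simp only [Fin.castSucc_zero, Fin.cons_zero] at hx
          have h1 : (Fin.cons e es : Fin (r+2) → G.E) (Fin.succ 0) = es 0 :=
            Fin.cons_succ _ _ _
          rw [h1, h0]
          exact (h x hx).2
        · intro j x hx
          rw [← Fin.succ_castSucc, Fin.cons_succ] at hx
          have := horig j x hx
          rwa [Fin.cons_succ]
      · rw [hflat]
        simp [List.ofFn_succ]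

lemma boldAux_mk : ∀ (r : ℕ) (es : Fin (r + 1) → G.E) (ps : Fin (r + 1) → List G.V),
    (∀ i, ps i ≠ []) → (∀ i, ∀ x ∈ ps i, x ∈ G.dest (es i)) →
    (∀ i : Fin r, ∀ x ∈ ps i.castSucc, x ∈ G.orig (es i.succ)) →
    BoldAux G (es 0) (List.ofFn ps).flatten := by
  intro r
  induction r with
  | zero =>
      intro es ps h1 h2 _
      have h : (List.ofFn ps).flatten = ps 0 := by simp
      rw [h]
      exact .last _ _ (h1 0) (h2 0)
  | succ r ih =>
      intro es ps h1 h2 h3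
      have h : (List.ofFn ps).flatten = ps 0 ++ (List.ofFn fun i => ps i.succ).flatten := by
        simp [List.ofFn_succ]
      rw [h]
      refine BoldAux.cons _ (es 1) _ _ (h1 0) ?_ ?_
      · intro x hx
        refine ⟨h2 0 x hx, ?_⟩
        have := h3 0 x (by simpa using hx)
        simpa using this
      · have := ih (fun i => es i.succ) (fun i => ps i.succ) (fun i => h1 _) (fun i => h2 _)
          (fun i x hx => by
            show x ∈ G.orig (es i.succ.succ)
            have hx' : x ∈ ps i.castSucc.succ := hx
            rw [Fin.succ_castSucc] at hx'
            exact h3 i.succ x hx')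
        simpa using this

lemma isBold_of_bold' {q : List G.V} (h : Bold' G q) : IsBold G q := by
  obtain ⟨e, p0, rest, hp0, horig, haux, rfl⟩ := h
  obtain ⟨r, es, ps, rfl, hne, hdest, horig2, rfl⟩ := haux.extract
  set P : Fin (r + 2) → List G.V := Fin.cons p0 ps with hP
  have hPn : ∀ i, P i ≠ [] := by
    intro i; refine Fin.cases ?_ ?_ i
    · exact hp0
    · intro j; simpa [hP] using hne j
  refine ⟨by simp [hp0], .inr ⟨r, es, P,
    fun i => (P i.castSucc).getLast (hPn _), fun i => (P i.succ).head (hPn _),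
    ?_, hPn, ?_, ?_, ?_, ?_, ?_, ?_⟩⟩
  · intro i
    exact ⟨(ps i.castSucc).head (hne _),
      hdest _ _ (List.head_mem _), horig2 i _ (List.head_mem _)⟩
  · simpa [hP] using horig
  · rw [show Fin.last (r + 1) = (Fin.last r).succ from (Fin.succ_last r).symm]
    simpa [hP] using hdest (Fin.last r)
  · intro i x hx
    rw [← Fin.succ_castSucc] at hx
    simp only [hP, Fin.cons_succ] at hx
    exact ⟨hdest _ _ hx, horig2 i _ hx⟩
  · intro i
    constructor
    · refine Fin.cases ?_ ?_ i
      · have hm := List.getLast_mem (hPn (Fin.castSucc 0))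
        simp only [hP, Fin.castSucc_zero, Fin.cons_zero] at hm ⊢
        exact horig _ hm
      · intro j
        show (P j.succ.castSucc).getLast (hPn _) ∈ G.orig (es j.succ)
        have hm : (P j.succ.castSucc).getLast (hPn _) ∈ P j.succ.castSucc :=
          List.getLast_mem _
        rw [← Fin.succ_castSucc] at hm
        simp only [hP, Fin.cons_succ] at hm
        exact horig2 j _ hm
    · show (P i.succ).head (hPn _) ∈ G.dest (es i)
      have hm : (P i.succ).head (hPn _) ∈ P i.succ := List.head_mem _
      simp only [hP, Fin.cons_succ] at hm
      exact hdest i _ hm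
  · intro i
    exact ⟨List.getLast?_eq_getLast _, List.head?_eq_head _⟩
  · simp [hP, List.ofFn_succ]

lemma bold'_of_isBold {q : List G.V} (h : IsBold G q) :
    q ≠ [] ∧ ((∃ e, (∀ x ∈ q, x ∈ G.orig e) ∨ ∀ x ∈ q, x ∈ G.dest e) ∨ Bold' G q) := by
  obtain ⟨hq, h | ⟨r, es, ps, v, w, hint, hne, hfirst, hlast, hmid, hvw, hvw2, rfl⟩⟩ := h
  · exact ⟨hq, .inl h⟩
  refine ⟨hq, .inr ?_⟩
  refine ⟨es 0, ps 0, (List.ofFn fun i => ps i.succ).flatten, hne 0, hfirst,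
    ?_, by simp [List.ofFn_succ]⟩
  refine boldAux_mk r es (fun i => ps i.succ) (fun i => hne _) ?_ ?_
  · intro i
    refine Fin.lastCases ?_ ?_ i
    · intro x hx
      have hx' : x ∈ ps (Fin.last r).succ := hx
      rw [Fin.succ_last] at hx'
      exact hlast x hx'
    · intro j x hx
      have hx' : x ∈ ps j.castSucc.succ := hx
      rw [Fin.succ_castSucc] at hx'
      exact (hmid j x hx').1
  · intro i x hx
    have hx' : x ∈ ps i.castSucc.succ := hx
    rw [Fin.succ_castSucc] at hx'
    exact (hmid i x hx').2

end Stmt15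

namespace Stmt15

variable {G : DiHyp}

/-- Horizontal edge of the box product `G □ I₁`. -/
def horiz (e : G.E) (b : Bool) : (G.box (lineI1 false)).E :=
  .inl (e, ⟨{b}, singleton_mem_P01_lineI1 false b⟩)

/-- Vertical edge of the box product `G □ I₁`. -/
def vert (C : Set G.V) (hC : C ∈ G.P01) : (G.box (lineI1 false)).E :=
  .inr (⟨C, hC⟩, ())

lemma BoldAux.lift {e : G.E} {rest : List G.V} (h : BoldAux G e rest) (b : Bool) :
    BoldAux (G.box (lineI1 false)) (horiz e b) (rest.map (·, b)) := by
  induction h with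
  | last e p hp hd =>
      refine .last _ _ (fun h => hp (List.map_eq_nil_iff.mp h)) ?_
      rintro y hy
      obtain ⟨x, hx, rfl⟩ := List.mem_map.mp hy
      exact ⟨hd x hx, rfl⟩
  | cons e e' p q hp hpe hq ih =>
      refine (congrArg (BoldAux _ (horiz e b)) List.map_append).mpr ?_
      refine .cons _ (horiz e' b) _ _ (fun h => hp (List.map_eq_nil_iff.mp h)) ?_ ih
      rintro y hy
      obtain ⟨x, hx, rfl⟩ := List.mem_map.mp hy
      exact ⟨⟨(hpe x hx).1, rfl⟩, ⟨(hpe x hx).2, rfl⟩⟩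

lemma split_lt {α β : Type*} (f g : α → β) {p q : List α} {k : ℕ} (h : k < p.length) :
    ((p ++ q).take (k + 1)).map f ++ ((p ++ q).drop k).map g
      = (p.take (k + 1)).map f ++ ((p.drop k).map g ++ q.map g) := by
  rw [List.take_append_of_le_length h, List.drop_append_of_le_length h.le,
    List.map_append]

lemma split_ge {α β : Type*} (f g : α → β) {p q : List α} {k : ℕ} (h : p.length ≤ k) :
    ((p ++ q).take (k + 1)).map f ++ ((p ++ q).drop k).map g
      = p.map f ++ ((q.take (k - p.length + 1)).map f ++ (q.drop (k - p.length)).map g) := by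
  rw [List.take_append, List.take_of_length_le (by omega),
    List.drop_append, List.drop_eq_nil_of_le h, List.nil_append,
    show k + 1 - p.length = k - p.length + 1 by omega, List.map_append, List.append_assoc]

lemma BoldAux.cross {e : G.E} {rest : List G.V} (h : BoldAux G e rest) :
    ∀ k, k < rest.length →
      BoldAux (G.box (lineI1 false)) (horiz e false)
        ((rest.take (k + 1)).map (·, false) ++ (rest.drop k).map (·, true)) := by
  induction h with
  | last e p hp hd =>
      intro k hk
      refine .cons _ (vert (G.dest e) ⟨e, .inr rfl⟩) _ _
        (fun h => (List.take_eq_nil_iff.mp (List.map_eq_nil_iff.mp h)).elim (Nat.succ_ne_zero k) hp) ?_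
        (.last _ _ (fun h => absurd (List.drop_eq_nil_iff.mp (List.map_eq_nil_iff.mp h)) (by omega)) ?_)
      · rintro y hy
        obtain ⟨x, hx, rfl⟩ := List.mem_map.mp hy
        have hx' := hd x (List.mem_of_mem_take hx)
        exact ⟨⟨hx', rfl⟩, ⟨hx', rfl⟩⟩
      · rintro y hy
        obtain ⟨x, hx, rfl⟩ := List.mem_map.mp hy
        exact ⟨hd x (List.mem_of_mem_drop hx), rfl⟩
  | cons e e' p q hp hpe hq ih =>
      intro k hk
      rcases lt_or_ge k p.length with hkp | hkp
      · rw [split_lt _ _ hkp]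
        refine .cons _ (vert (G.orig e') ⟨e', .inl rfl⟩) _ _
          (fun h => (List.take_eq_nil_iff.mp (List.map_eq_nil_iff.mp h)).elim (Nat.succ_ne_zero k) hp) ?_
          (.cons _ (horiz e' true) _ _ (fun h => absurd (List.drop_eq_nil_iff.mp (List.map_eq_nil_iff.mp h)) (by omega)) ?_
            (hq.lift true))
        · rintro y hy
          obtain ⟨x, hx, rfl⟩ := List.mem_map.mp hy
          have hx' := List.mem_of_mem_take hx
          exact ⟨⟨(hpe x hx').1, rfl⟩, ⟨(hpe x hx').2, rfl⟩⟩
        · rintro y hy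
          obtain ⟨x, hx, rfl⟩ := List.mem_map.mp hy
          have hx' := List.mem_of_mem_drop hx
          exact ⟨⟨(hpe x hx').2, rfl⟩, ⟨(hpe x hx').2, rfl⟩⟩
      · rw [split_ge _ _ hkp]
        refine .cons _ (horiz e' false) _ _ (fun h => hp (List.map_eq_nil_iff.mp h)) ?_
          (ih (k - p.length) (by rw [List.length_append] at hk; omega))
        rintro y hy
        obtain ⟨x, hx, rfl⟩ := List.mem_map.mp hy
        exact ⟨⟨(hpe x hx).1, rfl⟩, ⟨(hpe x hx).2, rfl⟩⟩

end Stmt15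


/-- for I₁ = (0 → 1), under the identification of V × {0,1} with
V ⊔ V', every path of the cylinder of the bold path complex 𝔅(G) is a bold path
of G □ I₁: an inclusion λ : [𝔅(G)]^↑ → 𝔅(G □ I₁) of path complexes. -/
theorem stmt_15 (G : DiHyp) :
    cylinder {q | IsBold G q} ⊆ {q | IsBold (G.box (lineI1 false)) q} := by
  rintro q hq
  simp only [cylinder, Set.mem_setOf_eq] at hq ⊢
  have lift_full : ∀ (p : List G.V) (b : Bool), IsBold G p →
      IsBold (G.box (lineI1 false)) (p.map (·, b)) := by
    intro p b hp
    obtain ⟨hne, hdeg | hb⟩ := Stmt15.bold'_of_isBold hp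
    · obtain ⟨e, h | h⟩ := hdeg
      · refine ⟨fun h => hne (List.map_eq_nil_iff.mp h), .inl ⟨Stmt15.horiz e b, .inl ?_⟩⟩
        rintro y hy
        obtain ⟨x, hx, rfl⟩ := List.mem_map.mp hy
        exact ⟨h x hx, rfl⟩
      · refine ⟨fun h => hne (List.map_eq_nil_iff.mp h), .inl ⟨Stmt15.horiz e b, .inr ?_⟩⟩
        rintro y hy
        obtain ⟨x, hx, rfl⟩ := List.mem_map.mp hy
        exact ⟨h x hx, rfl⟩
    · obtain ⟨e, p0, rest, hp0, ho, ha, rfl⟩ := hb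
      refine Stmt15.isBold_of_bold' ⟨Stmt15.horiz e b, p0.map (·, b), rest.map (·, b),
        fun h => hp0 (List.map_eq_nil_iff.mp h), ?_, ha.lift b, List.map_append⟩
      rintro y hy
      obtain ⟨x, hx, rfl⟩ := List.mem_map.mp hy
      exact ⟨ho x hx, rfl⟩
  rcases hq with ⟨p, hp, rfl⟩ | ⟨p, hp, rfl⟩ | ⟨p, hp, k, hk, rfl⟩
  · exact lift_full p false hp
  · exact lift_full p true hp
  · obtain ⟨hne, hdeg | hb⟩ := Stmt15.bold'_of_isBold hp
    · obtain ⟨e, h | h⟩ := hdeg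
      · refine Stmt15.isBold_of_bold' ⟨Stmt15.vert (G.orig e) ⟨e, .inl rfl⟩, _, _,
          fun h => (List.take_eq_nil_iff.mp (List.map_eq_nil_iff.mp h)).elim (Nat.succ_ne_zero k) hne, ?_,
          .last _ _ (fun h => absurd (List.drop_eq_nil_iff.mp (List.map_eq_nil_iff.mp h)) (by omega)) ?_, rfl⟩
        · rintro y hy
          obtain ⟨x, hx, rfl⟩ := List.mem_map.mp hy
          exact ⟨h x (List.mem_of_mem_take hx), rfl⟩
        · rintro y hy
          obtain ⟨x, hx, rfl⟩ := List.mem_map.mp hy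
          exact ⟨h x (List.mem_of_mem_drop hx), rfl⟩
      · refine Stmt15.isBold_of_bold' ⟨Stmt15.vert (G.dest e) ⟨e, .inr rfl⟩, _, _,
          fun h => (List.take_eq_nil_iff.mp (List.map_eq_nil_iff.mp h)).elim (Nat.succ_ne_zero k) hne, ?_,
          .last _ _ (fun h => absurd (List.drop_eq_nil_iff.mp (List.map_eq_nil_iff.mp h)) (by omega)) ?_, rfl⟩
        · rintro y hy
          obtain ⟨x, hx, rfl⟩ := List.mem_map.mp hy
          exact ⟨h x (List.mem_of_mem_take hx), rfl⟩
        · rintro y hy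
          obtain ⟨x, hx, rfl⟩ := List.mem_map.mp hy
          exact ⟨h x (List.mem_of_mem_drop hx), rfl⟩
    · obtain ⟨e, p0, rest, hp0, ho, ha, rfl⟩ := hb
      rw [List.length_append] at hk
      rcases lt_or_ge k p0.length with hkp | hkp
      · rw [Stmt15.split_lt _ _ hkp]
        refine Stmt15.isBold_of_bold' ⟨Stmt15.vert (G.orig e) ⟨e, .inl rfl⟩, _, _,
          fun h => (List.take_eq_nil_iff.mp (List.map_eq_nil_iff.mp h)).elim (Nat.succ_ne_zero k) hp0, ?_,
          .cons _ (Stmt15.horiz e true) _ _ (fun h => absurd (List.drop_eq_nil_iff.mp (List.map_eq_nil_iff.mp h)) (by omega)) ?_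
            (ha.lift true), rfl⟩
        · rintro y hy
          obtain ⟨x, hx, rfl⟩ := List.mem_map.mp hy
          exact ⟨ho x (List.mem_of_mem_take hx), rfl⟩
        · rintro y hy
          obtain ⟨x, hx, rfl⟩ := List.mem_map.mp hy
          exact ⟨⟨ho x (List.mem_of_mem_drop hx), rfl⟩, ⟨ho x (List.mem_of_mem_drop hx), rfl⟩⟩
      · rw [Stmt15.split_ge _ _ hkp]
        refine Stmt15.isBold_of_bold' ⟨Stmt15.horiz e false, _, _, fun h => hp0 (List.map_eq_nil_iff.mp h), ?_,
          ha.cross (k - p0.length) (by omega), rfl⟩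
        rintro y hy
        obtain ⟨x, hx, rfl⟩ := List.mem_map.mp hy
        exact ⟨ho x hx, rfl⟩
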